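/- If G is a connected graph with at least one edge, then γ(G) = 1/β(Ĝ), where γ(G) is the largest real zero of the adjoint polynomial h(G,x) and β(Ĝ) is the smallest zero in (0,1] of the independence polynomial of the associated graph Ĝ. -/

import Mathlib

open Polynomial

/-- A clique cover of `G`: a partition of the vertex set into parts each inducing a clique. -/
def SimpleGraph.IsCliqueCover {V : Type*} [Fintype V] [DecidableEq V] (G : SimpleGraph V)
    (P : Finpartition (Finset.univ : Finset V)) : Prop :=
  ∀ p ∈ P.parts, G.IsClique (p : Set V)

/-- `a_k(G)`: the number of clique covers of `G` with exactly `k` parts. -/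
noncomputable def numCliqueCovers {V : Type*} [Fintype V] [DecidableEq V] (G : SimpleGraph V)
    (k : ℕ) : ℕ :=
  {P : Finpartition (Finset.univ : Finset V) | G.IsCliqueCover P ∧ P.parts.card = k}.ncard

/-- A finset of vertices is independent: pairwise non-adjacent. -/
def SimpleGraph.IsIndepFinset {W : Type*} (H : SimpleGraph W) (s : Finset W) : Prop :=
  ∀ v ∈ s, ∀ w ∈ s, ¬ H.Adj v w

/-- `i_k(H)`: the number of independent sets of size `k` in `H`. -/
noncomputable def numIndepSets {W : Type*} (H : SimpleGraph W) (k : ℕ) : ℕ :=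
  {s : Finset W | H.IsIndepFinset s ∧ s.card = k}.ncard

/-- The auxiliary one-sided relation in the construction of `Ĝ`:
for edges `e = (u_i,u_j)`, `f = (u_k,u_l)` with `j ≤ l`, they are related iff
`i = k`, or `j = k`, or (`j = l` and `u_i, u_k` non-adjacent). -/
def hatRel {n : ℕ} (G : SimpleGraph (Fin n)) (e f : Fin n × Fin n) : Prop :=
  e.2 ≤ f.2 ∧ (e.1 = f.1 ∨ e.2 = f.1 ∨ (e.2 = f.2 ∧ ¬ G.Adj e.1 f.1))

/-- The graph `Ĝ` associated to `G` with its vertex ordering: vertices are the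
edges `(u_i,u_j)` with `i < j`. -/
def hatGraph {n : ℕ} (G : SimpleGraph (Fin n)) :
    SimpleGraph {p : Fin n × Fin n // p.1 < p.2 ∧ G.Adj p.1 p.2} where
  Adj e f := e ≠ f ∧ (hatRel G e.1 f.1 ∨ hatRel G f.1 e.1)
  symm := ⟨fun e f h => ⟨h.1.symm, h.2.symm⟩⟩
  loopless := ⟨fun e h => h.1 rfl⟩

/-- The independence polynomial `I(H,x) = Σ_k (-1)^k i_k(H) x^k` (over `ℝ`). -/
noncomputable def indepPoly {W : Type*} [Fintype W] (H : SimpleGraph W) : Polynomial ℝ :=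
  ∑ k ∈ Finset.range (Fintype.card W + 1), C ((-1 : ℝ) ^ k * (numIndepSets H k : ℝ)) * X ^ k

/-- The adjoint polynomial `h(G,x) = Σ_k (-1)^{n-k} a_k(G) x^k` (over `ℝ`). -/
noncomputable def adjPoly {V : Type*} [Fintype V] [DecidableEq V] (G : SimpleGraph V) :
    Polynomial ℝ :=
  ∑ k ∈ Finset.range (Fintype.card V + 1),
    C ((-1 : ℝ) ^ (Fintype.card V - k) * (numCliqueCovers G k : ℝ)) * X ^ k

/-- `h*(G,x) = x^n h(G,1/x) = Σ_k (-1)^k a_{n-k}(G) x^k` (over `ℝ`). -/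
noncomputable def hStarPoly {V : Type*} [Fintype V] [DecidableEq V] (G : SimpleGraph V) :
    Polynomial ℝ :=
  ∑ k ∈ Finset.range (Fintype.card V + 1),
    C ((-1 : ℝ) ^ k * (numCliqueCovers G (Fintype.card V - k) : ℝ)) * X ^ k

/-- Integer version of the independence polynomial. -/
noncomputable def indepPolyZ {W : Type*} [Fintype W] (H : SimpleGraph W) : Polynomial ℤ :=
  ∑ k ∈ Finset.range (Fintype.card W + 1), C ((-1 : ℤ) ^ k * (numIndepSets H k : ℤ)) * X ^ k

/-- Integer version of `h*`. -/
noncomputable def hStarPolyZ {V : Type*} [Fintype V] [DecidableEq V] (G : SimpleGraph V) :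
    Polynomial ℤ :=
  ∑ k ∈ Finset.range (Fintype.card V + 1),
    C ((-1 : ℤ) ^ k * (numCliqueCovers G (Fintype.card V - k) : ℤ)) * X ^ k

/-- A finset of edges forming a matching in `G`. -/
def SimpleGraph.IsMatchingFinset {V : Type*} (G : SimpleGraph V) (s : Finset (Sym2 V)) : Prop :=
  (↑s : Set (Sym2 V)) ⊆ G.edgeSet ∧
    ∀ e ∈ s, ∀ f ∈ s, e ≠ f → ∀ v, ¬(v ∈ e ∧ v ∈ f)

/-- `m_k(G)`: number of matchings of size `k`. -/
noncomputable def numMatchings {V : Type*} (G : SimpleGraph V) (k : ℕ) : ℕ :=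
  {s : Finset (Sym2 V) | G.IsMatchingFinset s ∧ s.card = k}.ncard

/-- The matching polynomial `M(G,x) = Σ_k (-1)^k m_k(G) x^{n-k}` (over `ℝ`). -/
noncomputable def matchPoly {V : Type*} [Fintype V] (G : SimpleGraph V) : Polynomial ℝ :=
  ∑ k ∈ Finset.range (Fintype.card V + 1),
    C ((-1 : ℝ) ^ k * (numMatchings G k : ℝ)) * X ^ (Fintype.card V - k)

/-- The line graph `L(G)`: vertices are the edges of `G`, adjacent iff distinct and
sharing an endpoint. -/
def lineGraph' {V : Type*} (G : SimpleGraph V) : SimpleGraph G.edgeSet where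
  Adj e f := e ≠ f ∧ ∃ v, v ∈ (e : Sym2 V) ∧ v ∈ (f : Sym2 V)
  symm := ⟨fun e f h => ⟨h.1.symm, h.2.choose, h.2.choose_spec.2, h.2.choose_spec.1⟩⟩
  loopless := ⟨fun e h => h.1 rfl⟩

/-- `H ∪ K₁`: the disjoint union of `H` with one isolated vertex. -/
def addIsolated {V : Type*} (H : SimpleGraph V) : SimpleGraph (V ⊕ Unit) where
  Adj x y := ∃ a b, x = Sum.inl a ∧ y = Sum.inl b ∧ H.Adj a b
  symm := ⟨by rintro x y ⟨a, b, rfl, rfl, h⟩; exact ⟨b, a, rfl, rfl, h.symm⟩⟩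
  loopless := ⟨by rintro x ⟨a, b, rfl, h, hadj⟩; cases Sum.inl_injective h; exact hadj.ne rfl⟩

/-- `b` is the smallest zero of `p` in `(0,1]`. -/
def IsBetaZero (p : Polynomial ℝ) (b : ℝ) : Prop :=
  b ∈ Set.Ioc (0 : ℝ) 1 ∧ p.eval b = 0 ∧ ∀ y ∈ Set.Ioc (0 : ℝ) 1, p.eval y = 0 → b ≤ y

/-- `g` is the largest real zero of `p`. -/
def IsGammaZero (p : Polynomial ℝ) (g : ℝ) : Prop :=
  p.eval g = 0 ∧ ∀ y : ℝ, p.eval y = 0 → y ≤ g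

set_option linter.unusedVariables false
set_option linter.unusedSectionVars false

namespace Stmt14Aux

open Finset

variable {n : ℕ} (G : SimpleGraph (Fin n)) [DecidableRel G.Adj]

abbrev EV (G : SimpleGraph (Fin n)) := {p : Fin n × Fin n // p.1 < p.2 ∧ G.Adj p.1 p.2}

def Indep (G : SimpleGraph (Fin n)) (S : Finset (EV G)) : Prop :=
  ∀ e ∈ S, ∀ f ∈ S, e ≠ f → ¬(hatRel G e.1 f.1 ∨ hatRel G f.1 e.1)

variable {G}

lemma indep_iff {S : Finset (EV G)} :
    (hatGraph G).IsIndepFinset S ↔ Indep G S := by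
  constructor
  · intro h e he f hf hne hrel
    exact h e he f hf (⟨hne, hrel⟩ : e ≠ f ∧ (hatRel G e.1 f.1 ∨ hatRel G f.1 e.1))
  · rintro h e he f hf (⟨hne, hrel⟩ : e ≠ f ∧ (hatRel G e.1 f.1 ∨ hatRel G f.1 e.1))
    exact h e he f hf hne hrel

lemma indep_mins_ne {S : Finset (EV G)} (hS : Indep G S) {e f : EV G} (he : e ∈ S) (hf : f ∈ S)
    (hne : e ≠ f) : e.1.1 ≠ f.1.1 := by
  intro h
  rcases le_total e.1.2 f.1.2 with hle | hle
  · exact hS e he f hf hne (Or.inl ⟨hle, Or.inl h⟩)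
  · exact hS e he f hf hne (Or.inr ⟨hle, Or.inl h.symm⟩)

lemma indep_max_ne_min {S : Finset (EV G)} (hS : Indep G S) {e f : EV G} (he : e ∈ S)
    (hf : f ∈ S) : e.1.2 ≠ f.1.1 := by
  intro h
  have hef : e ≠ f := by
    intro hh; subst hh; exact absurd h (ne_of_gt e.2.1)
  exact hS e he f hf hef (Or.inl ⟨h.le.trans f.2.1.le, Or.inr (Or.inl h)⟩)

lemma indep_adj_of_max_eq {S : Finset (EV G)} (hS : Indep G S) {e f : EV G} (he : e ∈ S)
    (hf : f ∈ S) (hne : e ≠ f) (h2 : e.1.2 = f.1.2) : G.Adj e.1.1 f.1.1 := by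
  by_contra hadj
  exact hS e he f hf hne (Or.inl ⟨h2.le, Or.inr (Or.inr ⟨h2, hadj⟩)⟩)

lemma indep_card_le {S : Finset (EV G)} (hS : Indep G S) : S.card ≤ n := by
  have : S.card ≤ (Finset.univ : Finset (Fin n)).card := by
    apply Finset.card_le_card_of_injOn (fun e => e.1.1) (fun _ _ => Finset.mem_univ _)
    intro e he f hf h
    by_contra hne
    exact indep_mins_ne hS he hf hne h
  simpa using this

variable (G)

noncomputable def center (S : Finset (EV G)) (v : Fin n) : Fin n :=
  if h : ∃ e ∈ S, (e : EV G).1.1 = v then h.choose.1.2 else v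

variable {G}

lemma center_eq_of_mem {S : Finset (EV G)} (hS : Indep G S) {e : EV G} (he : e ∈ S) :
    center G S e.1.1 = e.1.2 := by
  have h : ∃ f ∈ S, (f : EV G).1.1 = e.1.1 := ⟨e, he, rfl⟩
  rw [center, dif_pos h]
  obtain ⟨hf, hf1⟩ := h.choose_spec
  by_cases hce : h.choose = e
  · rw [hce]
  · exact absurd hf1 (indep_mins_ne hS hf he hce)

lemma center_eq_self {S : Finset (EV G)} {v : Fin n} (h : ∀ e ∈ S, (e : EV G).1.1 ≠ v) :
    center G S v = v := by
  rw [center, dif_neg]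
  rintro ⟨e, he, he1⟩
  exact h e he he1

lemma exists_of_center_ne {S : Finset (EV G)} {v : Fin n} (hv : center G S v ≠ v) :
    ∃ e ∈ S, (e : EV G).1.1 = v ∧ (e : EV G).1.2 = center G S v := by
  by_cases h : ∃ e ∈ S, (e : EV G).1.1 = v
  · obtain ⟨he, he1⟩ := h.choose_spec
    refine ⟨h.choose, he, he1, ?_⟩
    rw [center, dif_pos h]
  · exact absurd (center_eq_self (by push_neg at h; exact h)) hv

lemma center_max {S : Finset (EV G)} (hS : Indep G S) {e : EV G} (he : e ∈ S) :
    center G S e.1.2 = e.1.2 :=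
  center_eq_self fun f hf h1 => indep_max_ne_min hS he hf h1.symm

variable (G)

/-- Map from a partition to the set of "star" edges: `(v, max of part of v)`. -/
noncomputable def phi (P : Finpartition (Finset.univ : Finset (Fin n))) : Finset (EV G) :=
  Finset.univ.filter
    (fun e : EV G => e.1.1 ∈ P.part e.1.2 ∧ ∀ v ∈ P.part e.1.2, v ≤ e.1.2)

lemma mem_phi {P : Finpartition (Finset.univ : Finset (Fin n))} {e : EV G} :
    e ∈ phi G P ↔ e.1.1 ∈ P.part e.1.2 ∧ ∀ v ∈ P.part e.1.2, v ≤ e.1.2 := by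
  rw [phi, Finset.mem_filter]
  simp

def centerSetoid (S : Finset (EV G)) : Setoid (Fin n) :=
  ⟨fun a b => center G S a = center G S b, ⟨fun _ => rfl, Eq.symm, Eq.trans⟩⟩

noncomputable instance (S : Finset (EV G)) : DecidableRel (centerSetoid G S).r :=
  fun a b => instDecidableEqFin _ _ _

/-- Map from an edge set to the partition into components (fibers of `center`). -/
noncomputable def psi (S : Finset (EV G)) : Finpartition (Finset.univ : Finset (Fin n)) :=
  Finpartition.ofSetoid (centerSetoid G S)

lemma mem_part_psi {S : Finset (EV G)} {a b : Fin n} :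
    b ∈ (psi G S).part a ↔ center G S a = center G S b :=
  Finpartition.mem_part_ofSetoid_iff_rel


section Cover

variable {G}
variable {P : Finpartition (Finset.univ : Finset (Fin n))}

lemma part_eq_part_of_mem {v w : Fin n} (hw : w ∈ P.part v) : P.part w = P.part v :=
  P.part_eq_of_mem (P.part_mem.2 (Finset.mem_univ v)) hw

/-- Maximum of the part containing `v`. -/
noncomputable def mx (P : Finpartition (Finset.univ : Finset (Fin n))) (v : Fin n) : Fin n :=
  (P.part v).max' ⟨v, P.mem_part (Finset.mem_univ v)⟩

lemma mx_mem (P : Finpartition (Finset.univ : Finset (Fin n))) (v : Fin n) :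
    mx P v ∈ P.part v := Finset.max'_mem _ _

lemma le_mx {v w : Fin n} (hw : w ∈ P.part v) : w ≤ mx P v := Finset.le_max' _ _ hw

lemma self_le_mx (P : Finpartition (Finset.univ : Finset (Fin n))) (v : Fin n) :
    v ≤ mx P v := le_mx (P.mem_part (Finset.mem_univ v))

lemma mx_eq_of_part_eq {v w : Fin n} (h : P.part v = P.part w) : mx P v = mx P w := by
  apply le_antisymm
  · exact le_mx (h ▸ mx_mem P v)
  · exact le_mx (h.symm ▸ mx_mem P w)

lemma mx_part_eq {v w : Fin n} (hw : w ∈ P.part v) : mx P w = mx P v :=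
  mx_eq_of_part_eq (part_eq_part_of_mem hw)

lemma cover_adj (hP : G.IsCliqueCover P) {v w : Fin n} (hw : w ∈ P.part v) (hvw : v ≠ w) :
    G.Adj v w :=
  hP (P.part v) (P.part_mem.2 (Finset.mem_univ v)) (P.mem_part (Finset.mem_univ v)) hw hvw

lemma exists_phi_edge (hP : G.IsCliqueCover P) {v : Fin n} (hv : v ≠ mx P v) :
    ∃ e ∈ phi G P, (e : EV G).1.1 = v ∧ (e : EV G).1.2 = mx P v := by
  have hlt : v < mx P v := lt_of_le_of_ne (self_le_mx P v) hv
  have hadj : G.Adj v (mx P v) := cover_adj hP (mx_mem P v) hv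
  refine ⟨⟨(v, mx P v), hlt, hadj⟩, ?_, rfl, rfl⟩
  rw [mem_phi]
  have hpart : P.part (mx P v) = P.part v := part_eq_part_of_mem (mx_mem P v)
  constructor
  · simpa [hpart] using P.mem_part (Finset.mem_univ v)
  · intro w hw
    rw [hpart] at hw
    exact le_mx hw

lemma phi_mem_max {e : EV G} (he : e ∈ phi G P) : e.1.2 = mx P e.1.1 := by
  rw [mem_phi] at he
  have hpart : P.part e.1.1 = P.part e.1.2 :=
    P.part_eq_of_mem (P.part_mem.2 (Finset.mem_univ e.1.2)) he.1
  apply le_antisymm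
  · exact le_mx (hpart ▸ P.mem_part (Finset.mem_univ e.1.2))
  · apply he.2
    rw [← hpart]
    exact mx_mem P e.1.1

lemma phi_inj_min {e f : EV G} (he : e ∈ phi G P) (hf : f ∈ phi G P)
    (h : e.1.1 = f.1.1) : e = f := by
  apply Subtype.ext
  apply Prod.ext h
  rw [phi_mem_max he, phi_mem_max hf, h]

lemma phi_indep (hP : G.IsCliqueCover P) : Indep G (phi G P) := by
  have key : ∀ e ∈ phi G P, ∀ f ∈ phi G P, e ≠ f → ¬ hatRel G (e : EV G).1 (f : EV G).1 := by
    intro e he f hf hne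
    rintro ⟨hle, h1 | h2 | ⟨h3, hadj⟩⟩
    · exact hne (phi_inj_min he hf h1)
    · -- e.1.2 = f.1.1
      rw [mem_phi] at he hf
      have h1 : P.part f.1.1 = P.part f.1.2 :=
        P.part_eq_of_mem (P.part_mem.2 (Finset.mem_univ f.1.2)) hf.1
      have h2' : f.1.2 ∈ P.part e.1.2 := by
        have hm : f.1.2 ∈ P.part f.1.1 := by
          rw [h1]; exact P.mem_part (Finset.mem_univ _)
        rwa [← h2] at hm
      have := he.2 f.1.2 h2'
      have hlt : e.1.2 < f.1.2 := h2 ▸ f.2.1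
      exact absurd this (not_le.mpr hlt)
    · -- e.1.2 = f.1.2 and non-adjacent
      rw [mem_phi] at he hf
      have hmins : e.1.1 ≠ f.1.1 := by
        intro hh
        exact hne (Subtype.ext (Prod.ext hh h3))
      have hef : e.1.1 ∈ P.part f.1.2 := h3 ▸ he.1
      exact hadj (hP (P.part f.1.2) (P.part_mem.2 (Finset.mem_univ f.1.2)) hef hf.1 hmins)
  intro e he f hf hne hrel
  rcases hrel with h | h
  · exact key e he f hf hne h
  · exact key f hf e he hne.symm h

lemma isCliqueCover_psi {S : Finset (EV G)} (hS : Indep G S) :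
    G.IsCliqueCover (psi G S) := by
  intro p hp
  obtain ⟨a, ha⟩ := (psi G S).nonempty_of_mem_parts hp
  have hpa : (psi G S).part a = p := (psi G S).part_eq_of_mem hp ha
  rw [SimpleGraph.isClique_iff]
  intro v hv w hw hvw
  rw [← hpa] at hv hw
  have hv' : center G S a = center G S v := (mem_part_psi (G := G)).mp hv
  have hw' : center G S a = center G S w := (mem_part_psi (G := G)).mp hw
  have hcvw : center G S v = center G S w := hv'.symm.trans hw'
  by_cases hvc : center G S v = v
  · by_cases hwc : center G S w = w
    · exact absurd (hvc.symm.trans (hcvw.trans hwc)) hvw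
    · obtain ⟨f, hf, hf1, hf2⟩ := exists_of_center_ne hwc
      have : G.Adj f.1.1 f.1.2 := f.2.2
      rw [hf1, hf2, ← hcvw, hvc] at this
      exact this.symm
  · by_cases hwc : center G S w = w
    · obtain ⟨e, he, he1, he2⟩ := exists_of_center_ne hvc
      have : G.Adj e.1.1 e.1.2 := e.2.2
      rw [he1, he2, hcvw, hwc] at this
      exact this
    · obtain ⟨e, he, he1, he2⟩ := exists_of_center_ne hvc
      obtain ⟨f, hf, hf1, hf2⟩ := exists_of_center_ne hwc
      have hef : e ≠ f := by
        intro hh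
        rw [hh, hf1] at he1
        exact hvw he1.symm
      have := indep_adj_of_max_eq hS he hf hef (by rw [he2, hf2, hcvw])
      rwa [he1, hf1] at this

lemma phi_psi {S : Finset (EV G)} (hS : Indep G S) : phi G (psi G S) = S := by
  ext e
  rw [mem_phi]
  constructor
  · rintro ⟨h1, h2⟩
    have hc2 : center G S e.1.2 = e.1.2 := by
      by_contra hne
      obtain ⟨f, hf, hf1, hf2⟩ := exists_of_center_ne hne
      have hmem : f.1.2 ∈ (psi G S).part e.1.2 := by
        rw [mem_part_psi, center_max hS hf, hf2]
      have := h2 f.1.2 hmem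
      have hlt : e.1.2 < f.1.2 := hf1 ▸ f.2.1
      exact absurd this (not_le.mpr hlt)
    have h1' : center G S e.1.2 = center G S e.1.1 := (mem_part_psi (G := G)).mp h1
    have hce : center G S e.1.1 = e.1.2 := h1'.symm.trans hc2
    have hne : center G S e.1.1 ≠ e.1.1 := by
      rw [hce]; exact (ne_of_gt e.2.1)
    obtain ⟨f, hf, hf1, hf2⟩ := exists_of_center_ne hne
    have : f = e := Subtype.ext (Prod.ext hf1 (by rw [hf2, hce]))
    rwa [← this]
  · intro he
    have hc1 : center G S e.1.1 = e.1.2 := center_eq_of_mem hS he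
    have hc2 : center G S e.1.2 = e.1.2 := center_max hS he
    constructor
    · rw [mem_part_psi, hc1, hc2]
    · intro v hv
      rw [mem_part_psi, hc2] at hv
      by_cases hvc : center G S v = v
      · rw [hvc] at hv; exact hv.ge
      · obtain ⟨f, hf, hf1, hf2⟩ := exists_of_center_ne hvc
        calc v = f.1.1 := hf1.symm
        _ ≤ f.1.2 := f.2.1.le
        _ = e.1.2 := by rw [hf2, ← hv]

lemma center_phi_eq_mx (hP : G.IsCliqueCover P) (v : Fin n) :
    center G (phi G P) v = mx P v := by
  by_cases hv : v = mx P v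
  · rw [← hv]
    apply center_eq_self
    intro e he he1
    have hmax := phi_mem_max he
    rw [he1, ← hv] at hmax
    have hlt := e.2.1
    rw [he1, hmax] at hlt
    exact lt_irrefl _ hlt
  · obtain ⟨e, he, he1, he2⟩ := exists_phi_edge hP hv
    have := center_eq_of_mem (phi_indep hP) he
    rw [he1, he2] at this
    exact this

lemma part_ext {P Q : Finpartition (Finset.univ : Finset (Fin n))}
    (h : ∀ a, P.part a = Q.part a) : P = Q := by
  have hparts : P.parts = Q.parts := by
    ext p
    constructor <;> intro hp
    · obtain ⟨a, ha⟩ := P.nonempty_of_mem_parts hp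
      rw [← P.part_eq_of_mem hp ha, h a]
      exact Q.part_mem.2 (Finset.mem_univ a)
    · obtain ⟨a, ha⟩ := Q.nonempty_of_mem_parts hp
      rw [← Q.part_eq_of_mem hp ha, ← h a]
      exact P.part_mem.2 (Finset.mem_univ a)
  exact Finpartition.ext hparts

lemma psi_phi (hP : G.IsCliqueCover P) : psi G (phi G P) = P := by
  apply part_ext
  intro a
  ext b
  rw [mem_part_psi, center_phi_eq_mx hP, center_phi_eq_mx hP]
  constructor
  · intro h
    have h1 : mx P a ∈ P.part a := mx_mem P a
    have h2 : mx P a ∈ P.part b := h ▸ mx_mem P b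
    have : P.part a = P.part b :=
      P.eq_of_mem_parts (P.part_mem.2 (Finset.mem_univ a)) (P.part_mem.2 (Finset.mem_univ b)) h1 h2
    rw [this]
    exact P.mem_part (Finset.mem_univ b)
  · intro h
    exact (mx_part_eq h).symm

lemma card_phi (hP : G.IsCliqueCover P) : (phi G P).card = n - P.parts.card := by
  classical
  set M : Finset (Fin n) := Finset.univ.filter (fun v => v = mx P v) with hM
  have hcardM : M.card = P.parts.card := by
    apply Finset.card_bij (fun v _ => P.part v)
    · intro v hv
      exact P.part_mem.2 (Finset.mem_univ v)
    · intro v hv w hw hvw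
      rw [hM, Finset.mem_filter] at hv hw
      rw [hv.2, hw.2]
      exact mx_eq_of_part_eq hvw
    · intro p hp
      obtain ⟨a, ha⟩ := P.nonempty_of_mem_parts hp
      have hpa : P.part a = p := P.part_eq_of_mem hp ha
      refine ⟨mx P a, ?_, ?_⟩
      · rw [hM, Finset.mem_filter]
        refine ⟨Finset.mem_univ _, ?_⟩
        exact (mx_part_eq (mx_mem P a)).symm
      · rw [← hpa]
        exact part_eq_part_of_mem (mx_mem P a)
  have hcardPhi : (phi G P).card = (Finset.univ \ M).card := by
    apply Finset.card_bij (fun e _ => (e : EV G).1.1)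
    · intro e he
      rw [Finset.mem_sdiff]
      refine ⟨Finset.mem_univ _, ?_⟩
      rw [hM, Finset.mem_filter]
      push_neg
      intro _
      have hmax := phi_mem_max he
      intro hh
      have hlt := e.2.1
      rw [← hmax] at hh
      rw [hh] at hlt
      exact lt_irrefl _ hlt
    · intro e he f hf h
      exact phi_inj_min he hf h
    · intro v hv
      rw [Finset.mem_sdiff, hM, Finset.mem_filter] at hv
      have hvmx : v ≠ mx P v := by
        intro hh
        exact hv.2 ⟨Finset.mem_univ v, hh⟩
      obtain ⟨e, he, he1, _⟩ := exists_phi_edge hP hvmx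
      exact ⟨e, he, he1⟩
  rw [hcardPhi, Finset.card_sdiff_of_subset (Finset.subset_univ M), hcardM]
  simp

end Cover


section Counting

variable {G}

lemma count_eq {k : ℕ} (hk : k ≤ n) :
    numCliqueCovers G k = numIndepSets (hatGraph G) (n - k) := by
  classical
  have himage : {s : Finset (EV G) | (hatGraph G).IsIndepFinset s ∧ s.card = n - k}
      = phi G '' {P : Finpartition (Finset.univ : Finset (Fin n)) |
          G.IsCliqueCover P ∧ P.parts.card = k} := by
    ext S
    simp only [Set.mem_setOf_eq, Set.mem_image]
    constructor
    · rintro ⟨hind, hcard⟩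
      rw [indep_iff] at hind
      refine ⟨psi G S, ⟨isCliqueCover_psi hind, ?_⟩, phi_psi hind⟩
      have h1 : (phi G (psi G S)).card = n - (psi G S).parts.card :=
        card_phi (isCliqueCover_psi hind)
      rw [phi_psi hind, hcard] at h1
      have h2 : (psi G S).parts.card ≤ n := by
        simpa using (psi G S).card_parts_le_card
      omega
    · rintro ⟨P, ⟨hP, hk'⟩, rfl⟩
      refine ⟨indep_iff.mpr (phi_indep hP), ?_⟩
      rw [card_phi hP, hk']
  rw [numCliqueCovers, numIndepSets, himage]
  refine (Set.ncard_image_of_injOn ?_).symm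
  intro P hP Q hQ h
  calc P = psi G (phi G P) := (psi_phi hP.1).symm
  _ = psi G (phi G Q) := by rw [h]
  _ = Q := psi_phi hQ.1

lemma numIndepSets_hat_eq_zero {j : ℕ} (hj : n < j) :
    numIndepSets (hatGraph G) j = 0 := by
  have : {s : Finset (EV G) | (hatGraph G).IsIndepFinset s ∧ s.card = j} = ∅ := by
    rw [Set.eq_empty_iff_forall_notMem]
    rintro S ⟨hind, hcard⟩
    rw [indep_iff] at hind
    have := indep_card_le hind
    omega
  rw [numIndepSets, this, Set.ncard_empty]

lemma numIndepSets_eq_zero_of_card_lt {W : Type*} [Fintype W] (H : SimpleGraph W) {j : ℕ}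
    (hj : Fintype.card W < j) : numIndepSets H j = 0 := by
  have : {s : Finset W | H.IsIndepFinset s ∧ s.card = j} = ∅ := by
    rw [Set.eq_empty_iff_forall_notMem]
    rintro S ⟨hind, hcard⟩
    have h1 := Finset.card_le_univ S
    omega
  rw [numIndepSets, this, Set.ncard_empty]

lemma eval_identity (x : ℝ) (hx : x ≠ 0) :
    (adjPoly G).eval x = x ^ n * (indepPoly (hatGraph G)).eval (1 / x) := by
  classical
  have hcardV : Fintype.card (Fin n) = n := Fintype.card_fin n
  set m := Fintype.card {p : Fin n × Fin n // p.1 < p.2 ∧ G.Adj p.1 p.2} with hm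
  set N := max n m with hN
  set F : ℕ → ℝ := fun j =>
    (-1 : ℝ) ^ j * (numIndepSets (hatGraph G) j : ℝ) * (x ^ n * (1 / x) ^ j) with hF
  have hFzero : ∀ j, n < j → F j = 0 := by
    intro j hj
    rw [hF]
    simp [numIndepSets_hat_eq_zero hj]
  have hFzero' : ∀ j, m < j → F j = 0 := by
    intro j hj
    rw [hF]
    simp [numIndepSets_eq_zero_of_card_lt (hatGraph G) (hm ▸ hj)]
  have hLHS : (adjPoly G).eval x = ∑ j ∈ Finset.range (N + 1), F j := by
    rw [adjPoly, Polynomial.eval_finset_sum]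
    simp only [Polynomial.eval_mul, Polynomial.eval_C, Polynomial.eval_pow,
      Polynomial.eval_X, hcardV]
    rw [← Finset.sum_range_reflect]
    have step : ∀ j ∈ Finset.range (n + 1),
        (-1 : ℝ) ^ (n - (n + 1 - 1 - j)) * (numCliqueCovers G (n + 1 - 1 - j) : ℝ)
          * x ^ (n + 1 - 1 - j) = F j := by
      intro j hj
      rw [Finset.mem_range] at hj
      have hj' : j ≤ n := by omega
      have e1 : n + 1 - 1 - j = n - j := by omega
      have e2 : n - (n - j) = j := by omega
      rw [e1, e2, hF]
      have e3 : numCliqueCovers G (n - j) = numIndepSets (hatGraph G) j := by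
        rw [count_eq (Nat.sub_le n j), e2]
      rw [e3]
      have e4 : x ^ (n - j) = x ^ n * (1 / x) ^ j := by
        rw [one_div, inv_pow, ← pow_sub₀ x hx hj']
      rw [e4]
    rw [Finset.sum_congr rfl step]
    apply Finset.sum_subset
    · apply Finset.range_subset_range.mpr
      omega
    · intro j _ hj
      rw [Finset.mem_range] at hj
      exact hFzero j (by omega)
  have hRHS : x ^ n * (indepPoly (hatGraph G)).eval (1 / x)
      = ∑ j ∈ Finset.range (N + 1), F j := by
    rw [indepPoly, Polynomial.eval_finset_sum, Finset.mul_sum]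
    simp only [Polynomial.eval_mul, Polynomial.eval_C, Polynomial.eval_pow,
      Polynomial.eval_X]
    have step : ∀ j ∈ Finset.range (m + 1),
        x ^ n * ((-1 : ℝ) ^ j * (numIndepSets (hatGraph G) j : ℝ) * (1 / x) ^ j) = F j := by
      intro j _
      rw [hF]; ring
    rw [Finset.sum_congr rfl step]
    apply Finset.sum_subset
    · apply Finset.range_subset_range.mpr
      omega
    · intro j _ hj
      rw [Finset.mem_range] at hj
      exact hFzero' j (by omega)
  rw [hLHS, hRHS]

end Counting

end Stmt14Aux
/-- for connected `G` with at least one edge, `γ(G) = 1/β(Ĝ)`. -/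
theorem stmt14 {n : ℕ} (G : SimpleGraph (Fin n)) [DecidableRel G.Adj]
    (hc : G.Connected) (he : ∃ a b, G.Adj a b) (g b : ℝ)
    (hg : IsGammaZero (adjPoly G) g)
    (hb : IsBetaZero (indepPoly (hatGraph G)) b) :
    g = 1 / b := by
  obtain ⟨⟨hb0, hb1⟩, hbeval, hbmin⟩ := hb
  obtain ⟨hgeval, hgmax⟩ := hg
  have hbne : b ≠ 0 := ne_of_gt hb0
  have hroot : (adjPoly G).eval (1 / b) = 0 := by
    rw [Stmt14Aux.eval_identity (1 / b) (by positivity), one_div_one_div, hbeval, mul_zero]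
  have hg1 : 1 / b ≤ g := hgmax _ hroot
  have hb1' : (1 : ℝ) ≤ 1 / b := by
    have := one_div_le_one_div_of_le hb0 hb1
    simpa using this
  have hgge1 : (1 : ℝ) ≤ g := hb1'.trans hg1
  have hgpos : (0 : ℝ) < g := lt_of_lt_of_le one_pos hgge1
  have hIg : (indepPoly (hatGraph G)).eval (1 / g) = 0 := by
    have hid := Stmt14Aux.eval_identity (G := G) g (ne_of_gt hgpos)
    rw [hgeval] at hid
    have hgn : g ^ n ≠ 0 := pow_ne_zero _ (ne_of_gt hgpos)
    exact (mul_eq_zero.mp hid.symm).resolve_left hgn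
  have hmem : 1 / g ∈ Set.Ioc (0 : ℝ) 1 :=
    ⟨by positivity, by rw [div_le_one hgpos]; exact hgge1⟩
  have hble : b ≤ 1 / g := hbmin _ hmem hIg
  have h1 : b * g ≤ 1 := by rwa [le_div_iff₀ hgpos] at hble
  have h2 : (1 : ℝ) ≤ g * b := by rwa [div_le_iff₀ hb0] at hg1
  rw [eq_div_iff hbne]
  nlinarith [mul_comm b g]
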